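/- Let X be a set with two extended metrics d and d' that are Möbius equivalent (they induce the same cross-ratio triples on admissible quadruples) and share the same infinitely remote point ω (d(x,ω) = ∞ = d'(x,ω) for all x ≠ ω). Then d and d' are homothetic on X \ {ω}: there exists λ > 0 such that d'(x,y) = λ d(x,y) for all x, y ∈ X \ {ω}. -/
import Mathlib


/-- Projective equality of triples of reals, i.e. equality in `ℝP²`. -/
def ProjEq (a b : ℝ × ℝ × ℝ) : Prop :=
  ∃ c : ℝ, 0 < c ∧ b.1 = c * a.1 ∧ b.2.1 = c * a.2.1 ∧ b.2.2 = c * a.2.2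

/-- A quadruple is admissible if no entry occurs three or four times. -/
def Admissible {X : Type*} (x y z u : X) : Prop :=
  ¬ ((x = y ∧ y = z) ∨ (x = y ∧ y = u) ∨ (x = z ∧ z = u) ∨ (y = z ∧ z = u))

open scoped Classical in
/-- The cross-ratio triple of a quadruple with respect to an extended metric `d` with
infinitely remote point `ω`, with the standard conventions when `ω` occurs among the
entries: e.g. `crt(x,y,z,ω) = (d(x,y) : d(x,z) : d(y,z))` and `crt(x,y,ω,ω) = (0:1:1)`. -/
noncomputable def crt {X : Type*} (d : X → X → ℝ) (ω x y z u : X) : ℝ × ℝ × ℝ :=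
  if x = ω then
    (if y = ω then ((0 : ℝ), 1, 1) else if z = ω then ((1 : ℝ), 0, 1)
      else if u = ω then ((1 : ℝ), 1, 0) else (d z u, d y u, d y z))
  else if y = ω then
    (if z = ω then ((1 : ℝ), 1, 0) else if u = ω then ((1 : ℝ), 0, 1)
      else (d z u, d x z, d x u))
  else if z = ω then
    (if u = ω then ((0 : ℝ), 1, 1) else (d x y, d y u, d x u))
  else if u = ω then (d x y, d x z, d y z)
  else (d x y * d z u, d x z * d y u, d x u * d y z)

/-- two Möbius equivalent extended metrics with the same infinitely remote
point `ω` are homothetic on `X \ {ω}`. -/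
theorem moebius_equivalent_same_infinity_homothetic
    {X : Type*} (ω : X) (d d' : X → X → ℝ)
    (hd_self : ∀ x, d x x = 0) (hd'_self : ∀ x, d' x x = 0)
    (hd_comm : ∀ x y, x ≠ ω → y ≠ ω → d x y = d y x)
    (hd'_comm : ∀ x y, x ≠ ω → y ≠ ω → d' x y = d' y x)
    (hd_pos : ∀ x y, x ≠ ω → y ≠ ω → x ≠ y → 0 < d x y)
    (hd'_pos : ∀ x y, x ≠ ω → y ≠ ω → x ≠ y → 0 < d' x y)
    (hd_tri : ∀ x y z, x ≠ ω → y ≠ ω → z ≠ ω → d x z ≤ d x y + d y z)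
    (hd'_tri : ∀ x y z, x ≠ ω → y ≠ ω → z ≠ ω → d' x z ≤ d' x y + d' y z)
    (hequiv : ∀ x y z u : X, Admissible x y z u →
      ProjEq (crt d ω x y z u) (crt d' ω x y z u)) :
    ∃ lam : ℝ, 0 < lam ∧ ∀ x y, x ≠ ω → y ≠ ω → d' x y = lam * d x y := by
  classical
  by_cases hex : ∃ a b : X, a ≠ ω ∧ b ≠ ω ∧ a ≠ b
  · obtain ⟨a, b, ha, hb, hab⟩ := hex
    set r : X → X → ℝ := fun x y => d' x y / d x y with hrdef
    have key : ∀ x y z : X, x ≠ ω → y ≠ ω → z ≠ ω → x ≠ y → x ≠ z → y ≠ z →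
        r x y = r x z ∧ r x y = r y z := by
      intro x y z hx hy hz hxy hxz hyz
      have hadm : Admissible x y z ω := by
        rintro (⟨h, _⟩ | ⟨h, _⟩ | ⟨_, h⟩ | ⟨_, h⟩)
        · exact hxy h
        · exact hxy h
        · exact hz h
        · exact hz h
      obtain ⟨c, hc, h1, h2, h3⟩ := hequiv x y z ω hadm
      simp only [crt, if_neg hx, if_neg hy, if_neg hz, if_pos rfl] at h1 h2 h3
      have e1 : r x y = c := by
        simp only [hrdef]
        rw [div_eq_iff (ne_of_gt (hd_pos x y hx hy hxy))]
        exact h1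
      have e2 : r x z = c := by
        simp only [hrdef]
        rw [div_eq_iff (ne_of_gt (hd_pos x z hx hz hxz))]
        exact h2
      have e3 : r y z = c := by
        simp only [hrdef]
        rw [div_eq_iff (ne_of_gt (hd_pos y z hy hz hyz))]
        exact h3
      exact ⟨e1.trans e2.symm, e1.trans e3.symm⟩
    have sym : ∀ x y : X, x ≠ ω → y ≠ ω → r x y = r y x := by
      intro x y hx hy
      simp only [hrdef]
      rw [hd_comm x y hx hy, hd'_comm x y hx hy]
    have main : ∀ x y : X, x ≠ ω → y ≠ ω → x ≠ y → r x y = r a b := by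
      intro x y hx hy hxy
      by_cases hxa : x = a
      · subst hxa
        by_cases hyb : y = b
        · subst hyb; rfl
        · exact (key x y b hx hy hb hxy hab hyb).1
      · by_cases hxb : x = b
        · subst hxb
          by_cases hya : y = a
          · subst hya; exact sym x y hx hy
          · exact ((key x y a hx hy ha hxy (fun h => hab h.symm) hya).1).trans
              (sym x a hx ha)
        · by_cases hya : y = a
          · subst hya
            exact (sym x y hx hy).trans
              ((key y x b hy hx hb (fun h => hxa h.symm) hab hxb).1)
          · by_cases hyb : y = b
            · subst hyb
              exact (sym x y hx hy).trans
                (((key y x a hy hx ha (fun h => hxb h.symm) (fun h => hab h.symm)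
                  hxa).1).trans (sym y a hy ha))
            · exact ((key x y a hx hy ha hxy hxa hya).1).trans
                ((key x a b hx ha hb hxa hxb hab).2)
    refine ⟨r a b, ?_, ?_⟩
    · exact div_pos (hd'_pos a b ha hb hab) (hd_pos a b ha hb hab)
    · intro x y hx hy
      by_cases hxy : x = y
      · subst hxy; rw [hd_self, hd'_self, mul_zero]
      · have := main x y hx hy hxy
        have hdxy : d x y ≠ 0 := ne_of_gt (hd_pos x y hx hy hxy)
        have : d' x y / d x y = r a b := this
        field_simp at this
        linarith [this]
  · refine ⟨1, one_pos, ?_⟩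
    intro x y hx hy
    have hxy : x = y := by
      by_contra h
      exact hex ⟨x, y, hx, hy, h⟩
    subst hxy
    rw [hd_self, hd'_self, mul_zero]
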